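/- (Integral of spherical-cap volumes.) Let d ≥ 1, r > 0, and let e be a unit vector in ℝ^d. For t ≥ 0, let Cap(t) = { x ∈ ℝ^d : ‖x‖ ≤ r and ⟨x, e⟩ ≥ t } be the spherical cap of the ball B(0, r) at distance t from the center. Then ∫_0^r vol_d(Cap(t)) dt = η_{d−1} · r^{d+1} / (d+1), where vol_d denotes d-dimensional Lebesgue measure. -/

import Mathlib

open MeasureTheory
open scoped RealInnerProductSpace

/-- `unitBallVol d` is `η_d`, the Lebesgue volume of the unit ball in `ℝ^d`
(with the convention `η₀ = 1`). -/
noncomputable def unitBallVol (d : ℕ) : ℝ :=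
  (volume (Metric.closedBall (0 : EuclideanSpace ℝ (Fin d)) 1)).toReal


lemma sqrt_pow_eq_rpow {u : ℝ} (hu : 0 ≤ u) (n : ℕ) :
    Real.sqrt u ^ n = u ^ ((n : ℝ)/2) := by
  rw [Real.sqrt_eq_rpow, ← Real.rpow_natCast (u ^ (1/(2:ℝ))) n, ← Real.rpow_mul hu]
  ring_nf

lemma aux_integral (n : ℕ) {r : ℝ} (hr : 0 < r) :
    ∫ s in (0:ℝ)..r, s * Real.sqrt (r^2 - s^2) ^ n = r ^ (n+2) / ((n:ℝ)+2) := by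
  have h2 : (0:ℝ) < (n:ℝ) + 2 := by positivity
  set q : ℝ := ((n:ℝ) + 2) / 2 with hq
  have hq1 : 1 ≤ q := by
    rw [hq]; nlinarith [Nat.cast_nonneg (α := ℝ) n]
  set F : ℝ → ℝ := fun s => -((r^2 - s^2) ^ q) / ((n:ℝ)+2) with hF
  have hderiv : ∀ s ∈ Set.uIcc (0:ℝ) r, HasDerivAt F (s * Real.sqrt (r^2 - s^2) ^ n) s := by
    intro s hs
    rw [Set.uIcc_of_le hr.le] at hs
    have hu : 0 ≤ r^2 - s^2 := by nlinarith [hs.1, hs.2]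
    have h1 : HasDerivAt (fun s : ℝ => r^2 - s^2) (-(2*s)) s := by
      simpa using ((hasDerivAt_pow 2 s).const_sub (r^2))
    have h2' : HasDerivAt (fun u : ℝ => u ^ q) (q * (r^2-s^2) ^ (q-1)) (r^2 - s^2) :=
      Real.hasDerivAt_rpow_const (Or.inr hq1)
    have hcomp := h2'.comp s h1
    have hFd : HasDerivAt F (-(q * (r^2-s^2) ^ (q-1) * (-(2*s))) / ((n:ℝ)+2)) s := by
      simpa [hF] using (hcomp.neg.div_const ((n:ℝ)+2))
    convert hFd using 1
    rw [sqrt_pow_eq_rpow hu]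
    have hq' : q - 1 = (n:ℝ)/2 := by rw [hq]; ring
    rw [hq']
    field_simp
    ring
  have hcont : IntervalIntegrable (fun s => s * Real.sqrt (r^2 - s^2) ^ n) volume 0 r := by
    apply Continuous.intervalIntegrable
    fun_prop
  rw [intervalIntegral.integral_eq_sub_of_hasDerivAt hderiv hcont]
  have h0 : (0:ℝ) ^ q = 0 := Real.zero_rpow (by positivity)
  have hr2 : (r^2 : ℝ) ^ q = r ^ (n+2) := by
    have h22 : (r:ℝ)^2 = r ^ ((2:ℕ):ℝ) := by rw [Real.rpow_natCast]
    rw [h22, ← Real.rpow_natCast r (n+2), ← Real.rpow_mul hr.le]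
    congr 1
    push_cast
    rw [hq]; ring
  simp only [hF]
  rw [sub_self, show r^2 - (0:ℝ)^2 = r^2 by ring, h0, hr2]
  ring


lemma aux_slice (n : ℕ) {c : ℝ} (hc : 0 ≤ c) :
    volume {z : Fin n → ℝ | ∑ i, z i ^ 2 ≤ c} =
      ENNReal.ofReal (Real.sqrt c ^ n) *
        volume (Metric.closedBall (0 : EuclideanSpace ℝ (Fin n)) 1) := by
  have hset : (MeasurableEquiv.toLp 2 (Fin n → ℝ)).symm ⁻¹' {z : Fin n → ℝ | ∑ i, z i ^ 2 ≤ c}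
      = Metric.closedBall (0 : EuclideanSpace ℝ (Fin n)) (Real.sqrt c) := by
    ext x
    simp only [Set.mem_preimage, Set.mem_setOf_eq, Metric.mem_closedBall, dist_zero_right]
    have hx : ∀ i, (MeasurableEquiv.toLp 2 (Fin n → ℝ)).symm x i = x i := fun i => rfl
    have hnorm : ‖x‖ ^ 2 = ∑ i, (MeasurableEquiv.toLp 2 (Fin n → ℝ)).symm x i ^ 2 := by
      rw [EuclideanSpace.norm_eq, Real.sq_sqrt (by positivity)]
      exact Finset.sum_congr rfl fun i _ => by rw [hx, Real.norm_eq_abs, sq_abs]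
    rw [← hnorm, ← Real.le_sqrt (norm_nonneg x) hc]
  calc volume {z : Fin n → ℝ | ∑ i, z i ^ 2 ≤ c}
      = volume ((MeasurableEquiv.toLp 2 (Fin n → ℝ)).symm ⁻¹'
          {z : Fin n → ℝ | ∑ i, z i ^ 2 ≤ c}) := by
        rw [(EuclideanSpace.volume_preserving_symm_measurableEquiv_toLp (Fin n)).measure_preimage_equiv]
    _ = volume (Metric.closedBall (0 : EuclideanSpace ℝ (Fin n)) (Real.sqrt c)) := by rw [hset]
    _ = ENNReal.ofReal (Real.sqrt c ^ n) *
          volume (Metric.closedBall (0 : EuclideanSpace ℝ (Fin n)) 1) := by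
        rw [Measure.addHaar_closedBall' _ _ (Real.sqrt_nonneg c), finrank_euclideanSpace_fin]

lemma aux_main (n : ℕ) {r : ℝ} (hr : 0 < r) :
    ∫⁻ y : EuclideanSpace ℝ (Fin (n+1)),
        {y : EuclideanSpace ℝ (Fin (n+1)) | ‖y‖ ≤ r}.indicator
          (fun y => ENNReal.ofReal (y 0)) y
      = ENNReal.ofReal (r^(n+2)/((n:ℝ)+2)) *
          volume (Metric.closedBall (0 : EuclideanSpace ℝ (Fin n)) 1) := by
  classical
  set B := volume (Metric.closedBall (0 : EuclideanSpace ℝ (Fin n)) 1) with hB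
  -- step 1 : transfer to pi type
  set g : (Fin (n+1) → ℝ) → ENNReal := fun z =>
    {z : Fin (n+1) → ℝ | ∑ i, z i ^ 2 ≤ r^2}.indicator (fun z => ENNReal.ofReal (z 0)) z
    with hg
  have hgmeas : Measurable g := by
    apply Measurable.indicator
    · exact (measurable_pi_apply 0).ennreal_ofReal
    · exact (isClosed_le (by fun_prop) continuous_const).measurableSet
  have step1 : ∫⁻ y : EuclideanSpace ℝ (Fin (n+1)),
      {y : EuclideanSpace ℝ (Fin (n+1)) | ‖y‖ ≤ r}.indicator
        (fun y => ENNReal.ofReal (y 0)) y = ∫⁻ z : Fin (n+1) → ℝ, g z := by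
    rw [← (EuclideanSpace.volume_preserving_symm_measurableEquiv_toLp (Fin (n+1))).lintegral_comp hgmeas]
    congr 1
    funext y
    have hy : ∀ i, (MeasurableEquiv.toLp 2 (Fin (n+1) → ℝ)).symm y i = y i := fun _ => rfl
    have hnorm : ‖y‖ ≤ r ↔ ∑ i, (MeasurableEquiv.toLp 2 (Fin (n+1) → ℝ)).symm y i ^ 2 ≤ r^2 := by
      rw [EuclideanSpace.norm_eq]
      rw [Real.sqrt_le_left hr.le]
      constructor
      · intro h; refine le_trans (le_of_eq ?_) h
        exact Finset.sum_congr rfl fun i _ => by rw [hy, Real.norm_eq_abs, sq_abs]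
      · intro h; refine le_trans (le_of_eq ?_) h
        exact Finset.sum_congr rfl fun i _ => by rw [hy, Real.norm_eq_abs, sq_abs]
    simp only [hg, Set.indicator]
    by_cases h : ‖y‖ ≤ r
    · rw [if_pos (Set.mem_setOf_eq ▸ h), if_pos (by exact Set.mem_setOf_eq ▸ (hnorm.mp h))]
      rfl
    · rw [if_neg (by simpa using h), if_neg (by simpa using fun hh => h (hnorm.mpr hh))]
  rw [step1]
  -- step 2 : split off the first coordinate
  set ψ := MeasurableEquiv.piFinSuccAbove (fun _ : Fin (n+1) => ℝ) 0 with hψ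
  set h : ℝ × (Fin n → ℝ) → ENNReal := fun p =>
    {p : ℝ × (Fin n → ℝ) | p.1^2 + ∑ i, p.2 i ^ 2 ≤ r^2}.indicator
      (fun p => ENNReal.ofReal p.1) p with hh
  have hhmeas : Measurable h := by
    apply Measurable.indicator
    · exact measurable_fst.ennreal_ofReal
    · exact (isClosed_le (by fun_prop) continuous_const).measurableSet
  have step2 : ∫⁻ z : Fin (n+1) → ℝ, g z = ∫⁻ p : ℝ × (Fin n → ℝ), h p := by
    rw [← (volume_preserving_piFinSuccAbove (fun _ : Fin (n+1) => ℝ) 0).lintegral_comp hhmeas]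
    congr 1
    funext z
    have hsum : ∑ i, z i ^ 2 = z 0 ^ 2 + ∑ i, z ((0:Fin (n+1)).succAbove i) ^ 2 := by
      exact Fin.sum_univ_succAbove (fun i => z i ^ 2) 0
    simp only [hg, hh, Set.indicator, Set.mem_setOf_eq, hψ,
      MeasurableEquiv.piFinSuccAbove_apply]
    rw [hsum]
    rfl
  rw [step2]
  -- step 3 : Tonelli
  have step3 : ∫⁻ p : ℝ × (Fin n → ℝ), h p
      = ∫⁻ s : ℝ, ∫⁻ z : Fin n → ℝ, h (s, z) := by
    rw [Measure.volume_eq_prod, lintegral_prod _ hhmeas.aemeasurable]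
  rw [step3]
  -- step 4 : inner integral
  have step4 : ∀ s : ℝ, ∫⁻ z : Fin n → ℝ, h (s, z)
      = ENNReal.ofReal s * volume {z : Fin n → ℝ | ∑ i, z i ^ 2 ≤ r^2 - s^2} := by
    intro s
    have hsetEq : {z : Fin n → ℝ | s^2 + ∑ i, z i ^ 2 ≤ r^2}
        = {z : Fin n → ℝ | ∑ i, z i ^ 2 ≤ r^2 - s^2} := by
      ext z; simp only [Set.mem_setOf_eq]; constructor <;> intro hz <;> linarith
    have : (fun z : Fin n → ℝ => h (s, z))
        = {z : Fin n → ℝ | ∑ i, z i ^ 2 ≤ r^2 - s^2}.indicator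
            (fun _ => ENNReal.ofReal s) := by
      funext z
      simp only [hh, Set.indicator, Set.mem_setOf_eq]
      by_cases hz : s^2 + ∑ i, z i ^ 2 ≤ r^2
      · rw [if_pos hz, if_pos (by linarith)]
      · rw [if_neg hz, if_neg (by intro hzz; exact hz (by linarith))]
    rw [this, lintegral_indicator
      ((isClosed_le (by fun_prop) continuous_const).measurableSet), setLIntegral_const]
  simp only [step4]
  -- step 5 : restrict to Ioc 0 r
  have step5 : ∫⁻ s : ℝ,
      ENNReal.ofReal s * volume {z : Fin n → ℝ | ∑ i, z i ^ 2 ≤ r^2 - s^2}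
      = ∫⁻ s in Set.Ioc (0:ℝ) r,
          ENNReal.ofReal s * volume {z : Fin n → ℝ | ∑ i, z i ^ 2 ≤ r^2 - s^2} := by
    rw [← lintegral_indicator measurableSet_Ioc]
    congr 1
    funext s
    rw [Set.indicator]
    split_ifs with hs
    · rfl
    · rw [Set.mem_Ioc, not_and_or] at hs
      rcases hs with hs | hs
      · push_neg at hs
        rw [ENNReal.ofReal_eq_zero.mpr hs, zero_mul]
      · push_neg at hs
        have : {z : Fin n → ℝ | ∑ i, z i ^ 2 ≤ r^2 - s^2} = ∅ := by
          ext z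
          simp only [Set.mem_setOf_eq, Set.mem_empty_iff_false, iff_false, not_le]
          have : ∑ i, z i ^ 2 ≥ 0 := by positivity
          nlinarith
        rw [this, measure_empty, mul_zero]
  rw [step5]
  -- step 6 : use slice volume formula
  have step6 : ∫⁻ s in Set.Ioc (0:ℝ) r,
      ENNReal.ofReal s * volume {z : Fin n → ℝ | ∑ i, z i ^ 2 ≤ r^2 - s^2}
      = ∫⁻ s in Set.Ioc (0:ℝ) r,
          ENNReal.ofReal (s * Real.sqrt (r^2 - s^2) ^ n) * B := by
    apply setLIntegral_congr_fun measurableSet_Ioc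
    intro s hs
    beta_reduce
    rw [aux_slice n (by nlinarith [hs.1, hs.2] : (0:ℝ) ≤ r^2 - s^2), ← hB,
      ENNReal.ofReal_mul hs.1.le, mul_assoc]
  rw [step6]
  -- step 7 : pull out B and go back to a real integral
  rw [lintegral_mul_const' B _ (by
    rw [hB]; exact (measure_closedBall_lt_top).ne)]
  have hfi : IntegrableOn (fun s => s * Real.sqrt (r^2 - s^2) ^ n) (Set.Ioc (0:ℝ) r) := by
    apply Continuous.integrableOn_Ioc
    fun_prop
  have hnn : 0 ≤ᵐ[volume.restrict (Set.Ioc (0:ℝ) r)]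
      fun s => s * Real.sqrt (r^2 - s^2) ^ n := by
    rw [Filter.EventuallyLE, ae_restrict_iff' measurableSet_Ioc]
    apply ae_of_all
    intro s hs
    have := hs.1
    positivity
  rw [← ofReal_integral_eq_lintegral_ofReal hfi hnn,
    ← intervalIntegral.integral_of_le hr.le, aux_integral n hr]

/-- Integral of spherical-cap volumes:
`∫_0^r vol_d(Cap(t)) dt = η_{d−1} · r^{d+1} / (d+1)`. -/
theorem integral_sphericalCap_volume
    (d : ℕ) (hd : 1 ≤ d) (r : ℝ) (hr : 0 < r)
    (e : EuclideanSpace ℝ (Fin d)) (he : ‖e‖ = 1) :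
    ∫ t in (0 : ℝ)..r,
        (volume {x : EuclideanSpace ℝ (Fin d) | ‖x‖ ≤ r ∧ t ≤ ⟪x, e⟫}).toReal =
      unitBallVol (d - 1) * r ^ (d + 1) / (d + 1) := by
  classical
  obtain ⟨n, rfl⟩ : ∃ n, d = n + 1 := ⟨d - 1, (Nat.succ_pred_eq_of_pos hd).symm⟩
  -- an orthonormal basis whose 0-th vector is e
  have hv : Orthonormal ℝ (Set.restrict {(0 : Fin (n+1))} (fun _ => e)) := by
    constructor
    · intro i; exact he
    · intro i j hij
      exact absurd (Subtype.ext (by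
        have hi := i.2; have hj := j.2
        simp only [Set.mem_singleton_iff] at hi hj
        rw [hi, hj])) hij
  obtain ⟨b, hb⟩ := Orthonormal.exists_orthonormalBasis_extension_of_card_eq
    (by simp [finrank_euclideanSpace_fin]) hv
  have he0 : b 0 = e := hb 0 rfl
  -- the product set
  set A : Set (ℝ × EuclideanSpace ℝ (Fin (n+1))) := {p | ‖p.2‖ ≤ r ∧ p.1 ≤ ⟪p.2, e⟫} with hA_def
  have hA : MeasurableSet A := by
    apply IsClosed.measurableSet
    apply IsClosed.inter
    · exact isClosed_le continuous_snd.norm continuous_const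
    · exact isClosed_le continuous_fst (continuous_snd.inner continuous_const)
  have hAν : ∀ t : ℝ,
      {x : EuclideanSpace ℝ (Fin (n+1)) | ‖x‖ ≤ r ∧ t ≤ ⟪x, e⟫} = Prod.mk t ⁻¹' A :=
    fun t => rfl
  set ν : ℝ → ENNReal := fun t => volume (Prod.mk t ⁻¹' A) with hν
  have hνmeas : Measurable ν := measurable_measure_prodMk_left hA
  have hνfin : ∀ t, ν t < ⊤ := by
    intro t
    refine lt_of_le_of_lt (measure_mono ?_)
      (measure_closedBall_lt_top (x := (0 : EuclideanSpace ℝ (Fin (n+1)))) (r := r))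
    intro x hx
    simpa [Metric.mem_closedBall, dist_zero_right] using hx.1
  -- Step 1: convert to a lower integral
  have step1 : ∫ t in (0:ℝ)..r, (ν t).toReal = (∫⁻ t in Set.Ioc (0:ℝ) r, ν t).toReal := by
    rw [intervalIntegral.integral_of_le hr.le]
    exact integral_toReal hνmeas.aemeasurable (ae_of_all _ hνfin)
  simp only [hAν]
  rw [step1]
  -- Step 2: extend to Ioi 0
  have step2 : ∫⁻ t in Set.Ioc (0:ℝ) r, ν t = ∫⁻ t in Set.Ioi (0:ℝ), ν t := by
    rw [← Set.Ioc_union_Ioi_eq_Ioi hr.le,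
      lintegral_union measurableSet_Ioi (Set.Ioc_disjoint_Ioi le_rfl)]
    have hz : ∫⁻ t in Set.Ioi r, ν t = 0 := by
      rw [setLIntegral_congr_fun measurableSet_Ioi
        (fun t (ht : r < t) => ?_), lintegral_zero]
      have hemp : Prod.mk t ⁻¹' A = ∅ := by
        ext x
        simp only [← hAν, Set.mem_setOf_eq, Set.mem_empty_iff_false, iff_false, not_and, not_le]
        intro hx
        calc ⟪x, e⟫ ≤ ‖x‖ * ‖e‖ := real_inner_le_norm x e
          _ ≤ r := by rw [he, mul_one]; exact hx
          _ < t := ht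
      show volume (Prod.mk t ⁻¹' A) = 0
      rw [hemp, measure_empty]
    rw [hz, add_zero]
  rw [step2]
  -- Step 3: Fubini
  have step3 : ∫⁻ t in Set.Ioi (0:ℝ), ν t
      = ∫⁻ x : EuclideanSpace ℝ (Fin (n+1)),
          {x : EuclideanSpace ℝ (Fin (n+1)) | ‖x‖ ≤ r}.indicator
            (fun x => ENNReal.ofReal ⟪x, e⟫) x := by
    have h1 : ∫⁻ t in Set.Ioi (0:ℝ), ν t = ((volume.restrict (Set.Ioi (0:ℝ))).prod volume) A :=
      (Measure.prod_apply hA).symm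
    rw [h1, Measure.prod_apply_symm hA]
    congr 1
    funext x
    have hslice : (fun t => (t, x)) ⁻¹' A = {t : ℝ | ‖x‖ ≤ r ∧ t ≤ ⟪x, e⟫} := rfl
    rw [hslice]
    by_cases hx : ‖x‖ ≤ r
    · have hIic : {t : ℝ | ‖x‖ ≤ r ∧ t ≤ ⟪x, e⟫} = Set.Iic ⟪x, e⟫ := by
        ext t; simp [hx]
      rw [hIic, Set.indicator_of_mem (by exact hx), Measure.restrict_apply measurableSet_Iic,
        show Set.Iic ⟪x, e⟫ ∩ Set.Ioi (0:ℝ) = Set.Ioc (0:ℝ) ⟪x, e⟫ by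
          rw [Set.inter_comm, Set.Ioi_inter_Iic], Real.volume_Ioc, sub_zero]
    · have hemp : {t : ℝ | ‖x‖ ≤ r ∧ t ≤ ⟪x, e⟫} = ∅ := by
        ext t; simp [hx]
      rw [hemp, Set.indicator_of_notMem (by exact hx), measure_empty]
  rw [step3]
  -- Step 4: change of basis
  have hfmeas : Measurable (fun y : EuclideanSpace ℝ (Fin (n+1)) =>
      {y : EuclideanSpace ℝ (Fin (n+1)) | ‖y‖ ≤ r}.indicator
        (fun y => ENNReal.ofReal (y 0)) y) := by
    apply Measurable.indicator
    · exact ((measurable_pi_apply 0).comp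
        (MeasurableEquiv.toLp 2 (Fin (n+1) → ℝ)).symm.measurable).ennreal_ofReal
    · exact (isClosed_le continuous_norm continuous_const).measurableSet
  have step4 : ∫⁻ x : EuclideanSpace ℝ (Fin (n+1)),
        {x : EuclideanSpace ℝ (Fin (n+1)) | ‖x‖ ≤ r}.indicator
          (fun x => ENNReal.ofReal ⟪x, e⟫) x
      = ∫⁻ y : EuclideanSpace ℝ (Fin (n+1)),
          {y : EuclideanSpace ℝ (Fin (n+1)) | ‖y‖ ≤ r}.indicator
            (fun y => ENNReal.ofReal (y 0)) y := by
    rw [← (b.measurePreserving_repr).lintegral_comp hfmeas]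
    congr 1
    funext x
    have h1 : ‖(b.repr x : EuclideanSpace ℝ (Fin (n+1)))‖ = ‖x‖ := by simp
    have h2 : (b.repr x : EuclideanSpace ℝ (Fin (n+1))) 0 = ⟪x, e⟫ := by
      rw [b.repr_apply_apply, he0, real_inner_comm]
    simp only [Set.indicator, Set.mem_setOf_eq, h1, h2]
  rw [step4, aux_main n hr]
  -- final arithmetic
  rw [ENNReal.toReal_mul, ENNReal.toReal_ofReal (by positivity)]
  rw [show (n + 1 - 1 : ℕ) = n by simp]
  rw [unitBallVol]
  push_cast
  ring
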